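/- Let n ≥ 1 and let a : Fin n → ℕ satisfy a j ≤ 9 for all j, and set x = Σ_{j=0}^{n-1} a_j · 10^j. Extend a by a_{-1} = 0 and a_n = 0, and for 0 ≤ j ≤ n define the natural numbers c_j = ⌊a_{j-1}/2⌋ + 5·(a_j mod 2). Then 5·x = Σ_{j=0}^{n} c_j · 10^j. -/

import Mathlib

/-- Integer reformulation of the MZ-algorithm: if `a : Fin n → ℕ` are the
decimal digits of `x`, extended by `a_{-1} = 0` and `a_n = 0` (via `A : ℤ → ℕ`),
and `c_j = ⌊a_{j-1}/2⌋ + 5·(a_j mod 2)` for `0 ≤ j ≤ n`, then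
`5·x = Σ_{j=0}^{n} c_j · 10^j`. -/
theorem mz_algorithm_integer (n : ℕ) (hn : 1 ≤ n) (a : Fin n → ℕ)
    (ha : ∀ j, a j ≤ 9) (x : ℕ)
    (hx : x = ∑ j : Fin n, a j * 10 ^ (j : ℕ))
    (A : ℤ → ℕ) (hA : ∀ j : Fin n, A (j : ℕ) = a j)
    (hAneg : A (-1) = 0) (hAn : A (n : ℕ) = 0)
    (c : ℕ → ℕ)
    (hc : ∀ j : ℕ, j ≤ n → c j = A ((j : ℤ) - 1) / 2 + 5 * (A (j : ℕ) % 2)) :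
    5 * x = ∑ j ∈ Finset.range (n + 1), c j * 10 ^ j := by
  have hxA : x = ∑ k ∈ Finset.range n, A k * 10 ^ k := by
    rw [hx, ← Fin.sum_univ_eq_sum_range (fun k => A k * 10 ^ k) n]
    exact Finset.sum_congr rfl fun j _ => by rw [hA j]
  have hRHS : ∑ j ∈ Finset.range (n + 1), c j * 10 ^ j
      = ∑ j ∈ Finset.range (n + 1),
          (A ((j : ℤ) - 1) / 2 * 10 ^ j + 5 * (A (j : ℕ) % 2) * 10 ^ j) := by
    refine Finset.sum_congr rfl fun j hj => ?_
    rw [hc j (Nat.lt_succ_iff.mp (Finset.mem_range.mp hj)), add_mul]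
  rw [hRHS, Finset.sum_add_distrib]
  rw [Finset.sum_range_succ' (fun j => A ((j : ℤ) - 1) / 2 * 10 ^ j) n]
  rw [Finset.sum_range_succ (fun j => 5 * (A (j : ℕ) % 2) * 10 ^ j) n]
  simp only [hAneg, hAn]
  have hshift : ∀ i : ℕ, A ((((i + 1 : ℕ)) : ℤ) - 1) = A i := by
    intro i; congr 1; push_cast; ring
  simp only [hshift]
  norm_num [hAneg]
  rw [← Finset.sum_add_distrib, hxA, Finset.mul_sum]
  refine Finset.sum_congr rfl fun k _ => ?_
  obtain ⟨q, r, hr, hqr⟩ : ∃ q r, r < 2 ∧ A k = 2 * q + r :=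
    ⟨A k / 2, A k % 2, Nat.mod_lt _ two_pos, (Nat.div_add_mod _ 2).symm⟩
  have hd : (2 * q + r) / 2 = q := by omega
  have hm : (2 * q + r) % 2 = r := by omega
  rw [hqr, hd, hm, pow_succ]; ring
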